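/- For any real numbers α, β > 0, the set {(μ_{00}, μ_{01}, μ_{10}, μ_{11}) ∈ ℝ⁴ : μ_{jk} ≥ 0, μ_{00}+μ_{01}+μ_{10}+μ_{11} = 1, αμ_{00} ≤ μ_{01}, αμ_{10} ≥ μ_{11}, βμ_{00} ≥ μ_{10}, βμ_{01} ≤ μ_{11}} consists of exactly one point, namely μ_{00} = 1/((1+α)(1+β)), μ_{01} = α/((1+α)(1+β)), μ_{10} = β/((1+α)(1+β)), μ_{11} = αβ/((1+α)(1+β)). In particular, in all four defining inequalities equality must hold. -/

import Mathlib

/-- for `α, β > 0`, the correlated-equilibrium polytope of a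
competitive 2×2 game of type (II), i.e. the set of probability vectors
`μ = (μ₀₀, μ₀₁, μ₁₀, μ₁₁)` with `αμ₀₀ ≤ μ₀₁`, `αμ₁₀ ≥ μ₁₁`, `βμ₀₀ ≥ μ₁₀`,
`βμ₀₁ ≤ μ₁₁`, is the single point
`(1, α, β, αβ) / ((1+α)(1+β))` (so all four inequalities hold with equality). -/
theorem competitive_type_II_unique_point (α β : ℝ) (hα : 0 < α) (hβ : 0 < β) :
    {μ : Fin 4 → ℝ | (∀ j, 0 ≤ μ j) ∧ μ 0 + μ 1 + μ 2 + μ 3 = 1 ∧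
        α * μ 0 ≤ μ 1 ∧ μ 3 ≤ α * μ 2 ∧ μ 2 ≤ β * μ 0 ∧ β * μ 1 ≤ μ 3}
      = {![1 / ((1 + α) * (1 + β)), α / ((1 + α) * (1 + β)),
          β / ((1 + α) * (1 + β)), α * β / ((1 + α) * (1 + β))]} := by
  have hD : (0:ℝ) < (1 + α) * (1 + β) := by positivity
  ext μ
  simp only [Set.mem_setOf_eq, Set.mem_singleton_iff]
  constructor
  · rintro ⟨hpos, hsum, h1, h2, h3, h4⟩
    have k1 : β * (α * μ 0) ≤ β * μ 1 := by nlinarith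
    have k4 : α * μ 2 ≤ α * (β * μ 0) := by nlinarith
    -- chain forces equalities
    have e1 : μ 1 = α * μ 0 := by
      have : β * μ 1 = β * (α * μ 0) := by linarith
      have := mul_left_cancel₀ hβ.ne' this
      linarith
    have e2 : μ 2 = β * μ 0 := by
      have : α * μ 2 = α * (β * μ 0) := by linarith
      exact mul_left_cancel₀ hα.ne' this
    have e3 : μ 3 = α * (β * μ 0) := by nlinarith
    have e0 : μ 0 = 1 / ((1 + α) * (1 + β)) := by
      field_simp
      nlinarith
    funext i
    fin_cases i
    · simpa using e0
    · show μ 1 = α / ((1 + α) * (1 + β))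
      rw [e1, e0]; field_simp
    · show μ 2 = β / ((1 + α) * (1 + β))
      rw [e2, e0]; field_simp
    · show μ 3 = α * β / ((1 + α) * (1 + β))
      rw [e3, e0]; field_simp; try ring
  · rintro rfl
    refine ⟨?_, ?_, ?_, ?_, ?_, ?_⟩
    · intro j
      fin_cases j <;> simp <;> positivity
    · show 1 / ((1 + α) * (1 + β)) + α / ((1 + α) * (1 + β)) +
        β / ((1 + α) * (1 + β)) + α * β / ((1 + α) * (1 + β)) = 1
      field_simp; ring
    all_goals
      apply le_of_eq
      simp only [Matrix.cons_val_zero, Matrix.cons_val_one, Matrix.head_cons,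
        Matrix.cons_val_two, Matrix.cons_val_three, Matrix.tail_cons]
      field_simp
      try ring
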